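/- arXiv:2402.06276 — 4 statements merged into one kernel-verified Lean document; each statement's English description precedes it below -/
import Mathlib

section
/- Let m ≥ 1 and n ≥ 1 be natural numbers, let σ_f > 0 and σ > 0 be reals, and let Σ₁, …, Σₙ be positive semidefinite real m×m matrices whose diagonal entries satisfy (Σᵢ)ⱼⱼ ≤ σ_f² for all i and j. Set C = 2·σ_f^{2m} / log(1 + σ^{−2m}·σ_f^{2m}) and suppose γ ∈ ℝ satisfies (1/2)·∑_{i=1}^{n} log det(I_m + σ^{−2}·Σᵢ) ≤ γ. Then (1/n)·∑_{i=1}^{n} det Σᵢ ≤ C·γ/n. -/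
open Matrix

private lemma aux_one_add_prod {ι : Type*} (s : Finset ι) (hs : s.Nonempty) (a : ι → ℝ)
    (ha : ∀ i ∈ s, 0 ≤ a i) : 1 + ∏ i ∈ s, a i ≤ ∏ i ∈ s, (1 + a i) := by
  induction hs using Finset.Nonempty.cons_induction with
  | singleton i => simp
  | cons i s hi hs ih =>
    rw [Finset.prod_cons, Finset.prod_cons]
    have h1 : 0 ≤ a i := ha i (Finset.mem_cons_self i s)
    have h2 : ∀ j ∈ s, 0 ≤ a j := fun j hj => ha j (Finset.mem_cons_of_mem hj)
    have h3 := ih h2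
    have h4 : 0 ≤ ∏ j ∈ s, a j := Finset.prod_nonneg h2
    nlinarith [Finset.prod_nonneg (fun j hj => by nlinarith [h2 j hj] : ∀ j ∈ s, (0:ℝ) ≤ 1 + a j)]

private lemma aux_amgm (m : ℕ) (hm : 1 ≤ m) (lam : Fin m → ℝ) (hnn : ∀ i, 0 ≤ lam i)
    (a : ℝ) (ha : 0 ≤ a) (hsum : ∑ i, lam i ≤ m * a) : ∏ i, lam i ≤ a ^ m := by
  have hm0 : (0:ℝ) < m := by positivity
  have hgm := Real.geom_mean_le_arith_mean_weighted Finset.univ (fun _ => (m:ℝ)⁻¹) lam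
    (fun _ _ => by positivity) (by simp [Finset.card_univ]; field_simp) (fun i _ => hnn i)
  have h1 : ∑ i, (m:ℝ)⁻¹ * lam i ≤ a := by
    rw [← Finset.mul_sum, inv_mul_le_iff₀ hm0]
    linarith
  have h2 : (∏ i, lam i ^ ((m:ℝ)⁻¹)) ^ m = ∏ i, lam i := by
    rw [← Finset.prod_pow]
    congr 1; funext i
    rw [← Real.rpow_natCast (lam i ^ ((m:ℝ)⁻¹)) m, ← Real.rpow_mul (hnn i)]
    simp [inv_mul_cancel₀ (ne_of_gt hm0)]
  calc ∏ i, lam i = (∏ i, lam i ^ ((m:ℝ)⁻¹)) ^ m := h2.symm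
    _ ≤ a ^ m := pow_le_pow_left₀
        (Finset.prod_nonneg fun i _ => Real.rpow_nonneg (hnn i) _) (le_trans hgm h1) m

private lemma aux_chord (D K x : ℝ) (hD : 0 < D) (hK : 0 < K) (hx0 : 0 ≤ x) (hxK : x ≤ K) :
    Real.log (1 + D * K) * x ≤ K * Real.log (1 + D * x) := by
  have hcc := strictConcaveOn_log_Ioi.concaveOn
  have h1 : (1:ℝ) ∈ Set.Ioi (0:ℝ) := by norm_num
  have h2 : 1 + D * K ∈ Set.Ioi (0:ℝ) := by simp; positivity
  have ha : (0:ℝ) ≤ 1 - x / K := by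
    have : x / K ≤ 1 := (div_le_one hK).mpr hxK
    linarith
  have hb : (0:ℝ) ≤ x / K := by positivity
  have hab : (1 - x / K) + x / K = 1 := by ring
  have hconc := hcc.2 h1 h2 ha hb hab
  have hpt : (1 - x / K) • (1:ℝ) + (x / K) • (1 + D * K) = 1 + D * x := by
    field_simp
    have hK' : K * K⁻¹ = 1 := mul_inv_cancel₀ hK.ne'
    linear_combination (x * D + 1) * hK'
  rw [hpt, smul_eq_mul, smul_eq_mul, Real.log_one, mul_zero, zero_add] at hconc
  calc Real.log (1 + D * K) * x = K * (x / K * Real.log (1 + D * K)) := by field_simp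
    _ ≤ K * Real.log (1 + D * x) := mul_le_mul_of_nonneg_left hconc (le_of_lt hK)

private lemma aux_spectral (m : ℕ) (A : Matrix (Fin m) (Fin m) ℝ) (hA : A.PosSemidef) (c : ℝ) :
    (1 + c • A).det = ∏ i, (1 + c * hA.1.eigenvalues i) := by
  set U : Matrix (Fin m) (Fin m) ℝ := (hA.1.eigenvectorUnitary : Matrix (Fin m) (Fin m) ℝ) with hUdef
  have hU' : U * star U = 1 := (Matrix.mem_unitaryGroup_iff).mp (hA.1.eigenvectorUnitary).2
  have h1 := hA.1.spectral_theorem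
  set D : Matrix (Fin m) (Fin m) ℝ := diagonal (RCLike.ofReal ∘ hA.1.eigenvalues) with hD
  have key : U * (1 + c • D) * star U = 1 + c • A := by
    calc U * (1 + c • D) * star U
        = U * star U + c • (U * D * star U) := by
          rw [mul_add, add_mul, mul_one, Matrix.mul_smul, Matrix.smul_mul]
      _ = 1 + c • A := by rw [hU', h1, Unitary.conjStarAlgAut_apply]
  rw [← key, det_mul, det_mul]
  have h2 : det U * det (star U) = 1 := by rw [← det_mul, hU', det_one]
  have h3 : 1 + c • D = diagonal (fun i => 1 + c * hA.1.eigenvalues i) := by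
    rw [hD]
    ext i j
    by_cases h : i = j <;> simp [h, Matrix.one_apply, diagonal]
  calc det U * det (1 + c • D) * det (star U)
      = det (1 + c • D) * (det U * det (star U)) := by ring
    _ = det (1 + c • D) := by rw [h2, mul_one]
    _ = ∏ i, (1 + c * hA.1.eigenvalues i) := by rw [h3, det_diagonal]

/-- Lemma 2 of the paper, average predictive-variance bound:
if the positive semidefinite `m × m` covariance matrices `S 1, …, S n` have diagonal
entries bounded by `σf ^ 2` and the mutual information
`(1/2) ∑ i, log det (I + σ⁻² • S i)` is at most `γ`, then the average determinant
`(1/n) ∑ i, det (S i)` is at most `C * γ / n` with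
`C = 2 σf^{2m} / log (1 + σ^{-2m} σf^{2m})`. -/
theorem average_det_le_info_gain
    (m n : ℕ) (hm : 1 ≤ m) (hn : 1 ≤ n) (σf σ : ℝ) (hσf : 0 < σf) (hσ : 0 < σ)
    (S : Fin n → Matrix (Fin m) (Fin m) ℝ)
    (hpsd : ∀ i, (S i).PosSemidef)
    (hdiag : ∀ i j, S i j j ≤ σf ^ 2)
    (γ : ℝ)
    (hγ : (1 / 2 : ℝ) * ∑ i, Real.log ((1 + (σ ^ 2)⁻¹ • S i).det) ≤ γ) :
    (1 / n : ℝ) * ∑ i, (S i).det ≤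
      (2 * σf ^ (2 * m) / Real.log (1 + (σ ^ (2 * m))⁻¹ * σf ^ (2 * m))) * γ / n := by
  set c : ℝ := (σ ^ 2)⁻¹ with hc
  have hc0 : 0 < c := by positivity
  set K : ℝ := σf ^ (2 * m) with hK
  have hK0 : 0 < K := by positivity
  set Dc : ℝ := (σ ^ (2 * m))⁻¹ with hDc
  have hD0 : 0 < Dc := by positivity
  have hDcm : Dc = c ^ m := by
    rw [hDc, hc, pow_mul, ← inv_pow]
  set L : ℝ := Real.log (1 + Dc * K) with hL
  have hL0 : 0 < L := by
    apply Real.log_pos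
    have : 0 < Dc * K := by positivity
    linarith
  -- per-index facts
  have hdet_prod : ∀ i, (S i).det = ∏ j, (hpsd i).1.eigenvalues j := by
    intro i; simpa using (hpsd i).1.det_eq_prod_eigenvalues
  have heig_nonneg : ∀ i j, 0 ≤ (hpsd i).1.eigenvalues j := fun i => (hpsd i).eigenvalues_nonneg
  have hdet_nonneg : ∀ i, 0 ≤ (S i).det := fun i => by
    rw [hdet_prod i]; exact Finset.prod_nonneg fun j _ => heig_nonneg i j
  have hdetK : ∀ i, (S i).det ≤ K := by
    intro i
    rw [hdet_prod i, hK, pow_mul]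
    apply aux_amgm m hm _ (heig_nonneg i) (σf ^ 2) (by positivity)
    have htr : ∑ j, (hpsd i).1.eigenvalues j = (S i).trace := by
      have := (hpsd i).1.spectral_theorem
      calc ∑ j, (hpsd i).1.eigenvalues j
          = (diagonal (RCLike.ofReal ∘ (hpsd i).1.eigenvalues) : Matrix (Fin m) (Fin m) ℝ).trace := by
            simp [Matrix.trace_diagonal]
        _ = (S i).trace := by
            conv_rhs => rw [this]
            rw [Unitary.conjStarAlgAut_apply]
            rw [Matrix.trace_mul_cycle]
            rw [(Matrix.mem_unitaryGroup_iff').mp ((hpsd i).1.eigenvectorUnitary).2, one_mul]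
    rw [htr]
    calc (S i).trace = ∑ j, S i j j := by simp [Matrix.trace, Matrix.diag]
      _ ≤ ∑ _j : Fin m, σf ^ 2 := Finset.sum_le_sum fun j _ => hdiag i j
      _ = m * σf ^ 2 := by simp [mul_comm]
  have hdet1 : ∀ i, 1 + Dc * (S i).det ≤ (1 + c • S i).det := by
    intro i
    have hcm : c ^ m * ∏ j, (hpsd i).1.eigenvalues j = ∏ j, c * (hpsd i).1.eigenvalues j := by
      rw [Finset.prod_mul_distrib, Finset.prod_const, Finset.card_univ, Fintype.card_fin]
    rw [aux_spectral m (S i) (hpsd i) c, hdet_prod i, hDcm, hcm]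
    exact aux_one_add_prod Finset.univ (by have : Nonempty (Fin m) := ⟨⟨0, hm⟩⟩; exact Finset.univ_nonempty) _
      (fun j _ => mul_nonneg (le_of_lt hc0) (heig_nonneg i j))
  -- chain of inequalities
  have hmain : L * ∑ i, (S i).det ≤ K * (2 * γ) := by
    calc L * ∑ i, (S i).det = ∑ i, L * (S i).det := by rw [Finset.mul_sum]
      _ ≤ ∑ i, K * Real.log ((1 + c • S i).det) := by
          apply Finset.sum_le_sum
          intro i _
          calc L * (S i).det ≤ K * Real.log (1 + Dc * (S i).det) :=
                aux_chord Dc K _ hD0 hK0 (hdet_nonneg i) (hdetK i)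
            _ ≤ K * Real.log ((1 + c • S i).det) := by
                apply mul_le_mul_of_nonneg_left _ (le_of_lt hK0)
                apply Real.log_le_log _ (hdet1 i)
                have : 0 ≤ Dc * (S i).det := mul_nonneg (le_of_lt hD0) (hdet_nonneg i)
                linarith
      _ = K * ∑ i, Real.log ((1 + c • S i).det) := by rw [Finset.mul_sum]
      _ ≤ K * (2 * γ) := by
          apply mul_le_mul_of_nonneg_left _ (le_of_lt hK0)
          linarith
  have hsum : ∑ i, (S i).det ≤ 2 * K * γ / L := by
    rw [le_div_iff₀ hL0]
    nlinarith
  have hn0 : (0:ℝ) < n := by positivity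
  calc (1 / n : ℝ) * ∑ i, (S i).det ≤ (1 / n : ℝ) * (2 * K * γ / L) := by
        apply mul_le_mul_of_nonneg_left hsum (by positivity)
    _ = (2 * K / L) * γ / n := by ring
end

section
/- Let m ≥ 1 and d be natural numbers, let σ_f > 0 and σ > 0 be reals, and let Σ : ℕ → (real m×m matrices) be a sequence such that each Σᵢ is positive semidefinite with all diagonal entries at most σ_f². Suppose there is a constant D > 0 such that for every n ≥ 2, (1/2)·∑_{i=1}^{n} log det(I_m + σ^{−2}·Σᵢ) ≤ D·(log n)^{d+1}. Then (1/n)·∑_{i=1}^{n} det Σᵢ → 0 as n → ∞. -/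
open Matrix

-- product inequality
lemma my_prod_one_add {ι : Type*} (s : Finset ι) (hs : s.Nonempty) (f : ι → ℝ)
    (hf : ∀ i ∈ s, 0 ≤ f i) : 1 + ∏ i ∈ s, f i ≤ ∏ i ∈ s, (1 + f i) := by
  induction s using Finset.cons_induction with
  | empty => exact absurd hs (by simp)
  | cons a t ha ih =>
    rcases t.eq_empty_or_nonempty with rfl | ht
    · simp
    · have h1 := ih ht (fun i hi => hf i (Finset.mem_cons_of_mem hi))
      have h2 : 0 ≤ ∏ i ∈ t, f i := Finset.prod_nonneg fun i hi => hf i (Finset.mem_cons_of_mem hi)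
      have h3 : 0 ≤ f a := hf a (Finset.mem_cons_self a t)
      rw [Finset.prod_cons, Finset.prod_cons]
      nlinarith [Finset.prod_nonneg (fun i (hi : i ∈ t) => add_nonneg zero_le_one (hf i (Finset.mem_cons_of_mem hi)))]

-- smul psd
lemma my_smul_psd {m : ℕ} (A : Matrix (Fin m) (Fin m) ℝ) (hA : A.PosSemidef) {c : ℝ} (hc : 0 ≤ c) :
    (c • A).PosSemidef := by
  refine Matrix.PosSemidef.of_dotProduct_mulVec_nonneg ?_ fun x => ?_
  · unfold Matrix.IsHermitian at *
    rw [conjTranspose_smul, hA.1]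
    simp
  · rw [smul_mulVec, dotProduct_smul]
    exact smul_nonneg hc (hA.dotProduct_mulVec_nonneg x)

-- det of 1 + psd, and det expression
lemma my_det_one_add {m : ℕ} (hm : 1 ≤ m) (A : Matrix (Fin m) (Fin m) ℝ) (hA : A.PosSemidef) :
    1 + A.det ≤ (1 + A).det := by
  have hH := hA.1
  have hev : ∀ i, 0 ≤ hH.eigenvalues i := hA.eigenvalues_nonneg
  have hdet : A.det = ∏ i, hH.eigenvalues i := by
    simpa using hH.det_eq_prod_eigenvalues
  have hU : (hH.eigenvectorUnitary : Matrix (Fin m) (Fin m) ℝ) *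
      star (hH.eigenvectorUnitary : Matrix (Fin m) (Fin m) ℝ) = 1 :=
    Matrix.mem_unitaryGroup_iff.mp hH.eigenvectorUnitary.2
  have key : (1 + A).det = ∏ i, (1 + hH.eigenvalues i) := by
    conv_lhs => rw [hH.spectral_theorem, Unitary.conjStarAlgAut_apply]
    have : (1 : Matrix (Fin m) (Fin m) ℝ) +
        (hH.eigenvectorUnitary : Matrix (Fin m) (Fin m) ℝ) *
          diagonal (RCLike.ofReal ∘ hH.eigenvalues) *
          star (hH.eigenvectorUnitary : Matrix (Fin m) (Fin m) ℝ)
        = (hH.eigenvectorUnitary : Matrix (Fin m) (Fin m) ℝ) *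
          (1 + diagonal (RCLike.ofReal ∘ hH.eigenvalues)) *
          star (hH.eigenvectorUnitary : Matrix (Fin m) (Fin m) ℝ) := by
      rw [mul_add, add_mul, mul_one, hU]
    have hDdet : (1 + diagonal (RCLike.ofReal ∘ hH.eigenvalues) : Matrix (Fin m) (Fin m) ℝ).det
        = ∏ i, (1 + hH.eigenvalues i) := by
      rw [show (1 : Matrix (Fin m) (Fin m) ℝ) = diagonal 1 from (diagonal_one).symm,
        diagonal_add, det_diagonal]
      simp [RCLike.ofReal_real_eq_id]
    rw [this, det_mul, det_mul, hDdet]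
    have h1 : ((hH.eigenvectorUnitary : Matrix (Fin m) (Fin m) ℝ)).det *
        (star (hH.eigenvectorUnitary : Matrix (Fin m) (Fin m) ℝ)).det = 1 := by
      rw [← det_mul, hU, det_one]
    linear_combination (∏ i, (1 + hH.eigenvalues i)) * h1
  rw [key, hdet]
  haveI : Nonempty (Fin m) := ⟨⟨0, hm⟩⟩
  exact my_prod_one_add Finset.univ Finset.univ_nonempty _ (fun i _ => hev i)

lemma my_det_nonneg {m : ℕ} (A : Matrix (Fin m) (Fin m) ℝ) (hA : A.PosSemidef) : 0 ≤ A.det := by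
  have hH := hA.1
  rw [show A.det = ∏ i, hH.eigenvalues i by simpa using hH.det_eq_prod_eigenvalues]
  exact Finset.prod_nonneg fun i _ => hA.eigenvalues_nonneg i

lemma my_det_le {m : ℕ} (A : Matrix (Fin m) (Fin m) ℝ) (hA : A.PosSemidef) {c : ℝ} (hc : 0 ≤ c)
    (hd : ∀ j, A j j ≤ c) : A.det ≤ (m * c) ^ m := by
  have hH := hA.1
  have hev : ∀ i, 0 ≤ hH.eigenvalues i := hA.eigenvalues_nonneg
  -- sum of eigenvalues = trace
  have htr : ∑ i, hH.eigenvalues i = A.trace := by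
    have hU' : star (hH.eigenvectorUnitary : Matrix (Fin m) (Fin m) ℝ) *
        (hH.eigenvectorUnitary : Matrix (Fin m) (Fin m) ℝ) = 1 :=
      Matrix.mem_unitaryGroup_iff'.mp hH.eigenvectorUnitary.2
    conv_rhs => rw [hH.spectral_theorem, Unitary.conjStarAlgAut_apply]
    rw [Matrix.trace_mul_cycle, hU', one_mul, trace_diagonal]
    simp [RCLike.ofReal_real_eq_id]
  have htrle : A.trace ≤ m * c := by
    rw [Matrix.trace]
    calc ∑ i, A.diag i ≤ ∑ _i : Fin m, c := Finset.sum_le_sum fun i _ => hd i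
    _ = m * c := by simp [mul_comm]
  have hle : ∀ i, hH.eigenvalues i ≤ m * c := by
    intro i
    calc hH.eigenvalues i ≤ ∑ j, hH.eigenvalues j :=
      Finset.single_le_sum (fun j _ => hev j) (Finset.mem_univ i)
    _ ≤ m * c := htr ▸ htrle
  rw [show A.det = ∏ i, hH.eigenvalues i by simpa using hH.det_eq_prod_eigenvalues]
  calc ∏ i, hH.eigenvalues i ≤ ∏ _i : Fin m, (m * c) :=
    Finset.prod_le_prod (fun i _ => hev i) (fun i _ => hle i)
  _ = (m * c) ^ m := by simp

/-- Lemma 2 combined with Theorems 2/3 of the paper: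
if the positive semidefinite covariance matrices `S i` have diagonal entries bounded
by `σf ^ 2` and the mutual information `(1/2) ∑_{i=1}^n log det (I + σ⁻² • S i)` is at
most `D * (log n)^(d+1)` for all `n ≥ 2`, then the average determinant
`(1/n) ∑_{i=1}^n det (S i)` tends to `0`. -/
theorem average_det_tendsto_zero_of_info_gain_polylog
    (m d : ℕ) (hm : 1 ≤ m) (σf σ : ℝ) (hσf : 0 < σf) (hσ : 0 < σ)
    (S : ℕ → Matrix (Fin m) (Fin m) ℝ)
    (hpsd : ∀ i, (S i).PosSemidef)
    (hdiag : ∀ i j, S i j j ≤ σf ^ 2)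
    (D : ℝ) (hD : 0 < D)
    (hinfo : ∀ n : ℕ, 2 ≤ n →
      (1 / 2 : ℝ) * ∑ i ∈ Finset.Icc 1 n, Real.log ((1 + (σ ^ 2)⁻¹ • S i).det) ≤
        D * Real.log n ^ (d + 1)) :
    Filter.Tendsto (fun n : ℕ => (1 / n : ℝ) * ∑ i ∈ Finset.Icc 1 n, (S i).det)
      Filter.atTop (nhds 0) := by
  have hσ2 : (0:ℝ) < σ ^ 2 := by positivity
  have hc0 : (0:ℝ) ≤ (σ ^ 2)⁻¹ := by positivity
  set T : ℝ := ((σ ^ 2)⁻¹) ^ m * ((m : ℝ) * σf ^ 2) ^ m with hT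
  have hT0 : 0 ≤ T := by positivity
  have hBpsd : ∀ i, ((σ ^ 2)⁻¹ • S i).PosSemidef := fun i => my_smul_psd _ (hpsd i) hc0
  have ht0 : ∀ i, 0 ≤ ((σ ^ 2)⁻¹ • S i).det := fun i => my_det_nonneg _ (hBpsd i)
  have hdetsmul : ∀ i, ((σ ^ 2)⁻¹ • S i).det = ((σ ^ 2)⁻¹) ^ m * (S i).det := by
    intro i; rw [det_smul]; simp
  have hSdet : ∀ i, (S i).det = (σ ^ 2) ^ m * ((σ ^ 2)⁻¹ • S i).det := by
    intro i
    rw [hdetsmul i, ← mul_assoc, ← mul_pow, mul_inv_cancel₀ (ne_of_gt hσ2), one_pow, one_mul]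
  have htT : ∀ i, ((σ ^ 2)⁻¹ • S i).det ≤ T := by
    intro i
    rw [hdetsmul i, hT]
    refine mul_le_mul_of_nonneg_left ?_ (by positivity)
    exact my_det_le _ (hpsd i) (by positivity) (hdiag i)
  have key : ∀ i, ((σ ^ 2)⁻¹ • S i).det ≤ (1 + T) * Real.log ((1 + (σ ^ 2)⁻¹ • S i).det) := by
    intro i
    set t := ((σ ^ 2)⁻¹ • S i).det with htd
    have h1 : 1 + t ≤ (1 + (σ ^ 2)⁻¹ • S i).det := my_det_one_add hm _ (hBpsd i)
    have hpos : (0:ℝ) < 1 + t := by have := ht0 i; rw [← htd] at this; linarith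
    have hlog1 : Real.log (1 + t) ≤ Real.log ((1 + (σ ^ 2)⁻¹ • S i).det) :=
      Real.log_le_log hpos h1
    have h3 := Real.one_sub_inv_le_log_of_pos hpos
    have h2 : t ≤ (1 + t) * Real.log (1 + t) := by
      have h4 := mul_le_mul_of_nonneg_left h3 hpos.le
      have h5 : (1 + t) * (1 - (1 + t)⁻¹) = t := by field_simp; ring
      linarith [h5 ▸ h4]
    have hlognn : 0 ≤ Real.log (1 + t) := Real.log_nonneg (by nlinarith [ht0 i])
    have htT' : t ≤ T := htT i
    calc t ≤ (1 + t) * Real.log (1 + t) := h2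
      _ ≤ (1 + T) * Real.log (1 + t) := by
          exact mul_le_mul_of_nonneg_right (by linarith) hlognn
      _ ≤ (1 + T) * Real.log ((1 + (σ ^ 2)⁻¹ • S i).det) :=
          mul_le_mul_of_nonneg_left hlog1 (by linarith)
  set K : ℝ := (σ ^ 2) ^ m * ((1 + T) * (2 * D)) with hK
  have hupper : ∀ n : ℕ, 2 ≤ n →
      (1 / n : ℝ) * ∑ i ∈ Finset.Icc 1 n, (S i).det ≤ K * (Real.log n ^ (d + 1) / n) := by
    intro n hn
    have hsum : ∑ i ∈ Finset.Icc 1 n, (S i).det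
        = (σ ^ 2) ^ m * ∑ i ∈ Finset.Icc 1 n, ((σ ^ 2)⁻¹ • S i).det := by
      rw [Finset.mul_sum]; exact Finset.sum_congr rfl fun i _ => hSdet i
    have hstep : ∑ i ∈ Finset.Icc 1 n, ((σ ^ 2)⁻¹ • S i).det
        ≤ (1 + T) * (2 * D * Real.log n ^ (d + 1)) := by
      calc ∑ i ∈ Finset.Icc 1 n, ((σ ^ 2)⁻¹ • S i).det
          ≤ ∑ i ∈ Finset.Icc 1 n, (1 + T) * Real.log ((1 + (σ ^ 2)⁻¹ • S i).det) :=
            Finset.sum_le_sum fun i _ => key i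
        _ = (1 + T) * ∑ i ∈ Finset.Icc 1 n, Real.log ((1 + (σ ^ 2)⁻¹ • S i).det) := by
            rw [Finset.mul_sum]
        _ ≤ (1 + T) * (2 * D * Real.log n ^ (d + 1)) := by
            refine mul_le_mul_of_nonneg_left ?_ (by linarith)
            have := hinfo n hn
            linarith
    have hn0 : (0:ℝ) ≤ 1 / (n:ℝ) := by positivity
    calc (1 / n : ℝ) * ∑ i ∈ Finset.Icc 1 n, (S i).det
        ≤ (1 / n : ℝ) * ((σ ^ 2) ^ m * ((1 + T) * (2 * D * Real.log n ^ (d + 1)))) := by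
          refine mul_le_mul_of_nonneg_left ?_ hn0
          rw [hsum]
          exact mul_le_mul_of_nonneg_left hstep (by positivity)
      _ = K * (Real.log n ^ (d + 1) / n) := by rw [hK]; ring
  have hlower : ∀ n : ℕ, (0:ℝ) ≤ (1 / n : ℝ) * ∑ i ∈ Finset.Icc 1 n, (S i).det := by
    intro n
    exact mul_nonneg (by positivity) (Finset.sum_nonneg fun i _ => my_det_nonneg _ (hpsd i))
  have hg : Filter.Tendsto (fun n : ℕ => K * (Real.log n ^ (d + 1) / n))
      Filter.atTop (nhds 0) := by
    have h0 := Real.tendsto_pow_log_div_mul_add_atTop 1 0 (d + 1) one_ne_zero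
    simp only [one_mul, add_zero] at h0
    have h1 := h0.comp (tendsto_natCast_atTop_atTop (R := ℝ))
    simpa using h1.const_mul K
  refine tendsto_of_tendsto_of_tendsto_of_le_of_le' tendsto_const_nhds hg
    (Filter.Eventually.of_forall hlower) ?_
  filter_upwards [Filter.eventually_ge_atTop 2] with n hn using hupper n hn
end

section
/- Let m ≥ 1 be a natural number, σ_f > 0 and σ > 0 reals, and let Σ be a positive semidefinite real m×m matrix with all diagonal entries at most σ_f². Set C₁ = σ_f^{2m} / log(1 + σ^{−2m}·σ_f^{2m}). Then det Σ ≤ C₁ · log(1 + σ^{−2m}·det Σ). -/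
open Matrix

/-- AM–GM bound: the determinant of a PSD matrix is at most `(trace/m)^m ≤ (max diag)^m`. -/
lemma det_le_pow_of_diag_le {m : ℕ} (hm : 1 ≤ m) {S : Matrix (Fin m) (Fin m) ℝ}
    (hpsd : S.PosSemidef) {c : ℝ} (hc : 0 ≤ c) (hdiag : ∀ j, S j j ≤ c) :
    S.det ≤ c ^ m := by
  have h := hpsd.1
  have hm0 : (m : ℝ) ≠ 0 := by positivity
  have hev : ∀ i, 0 ≤ h.eigenvalues i := hpsd.eigenvalues_nonneg
  -- trace = sum of eigenvalues
  have htr : ∑ i, h.eigenvalues i = S.trace := by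
    have hst := h.spectral_theorem
    have : S.trace = (Matrix.diagonal (RCLike.ofReal ∘ h.eigenvalues)).trace := by
      conv_lhs => rw [hst]
      rw [Unitary.conjStarAlgAut_apply, Matrix.trace_mul_cycle]
      rw [show (star (h.eigenvectorUnitary : Matrix (Fin m) (Fin m) ℝ)) *
          (h.eigenvectorUnitary : Matrix (Fin m) (Fin m) ℝ) = 1 from
        Matrix.mem_unitaryGroup_iff'.mp h.eigenvectorUnitary.2, one_mul]
    rw [this, Matrix.trace_diagonal]
    simp
  have htrace_le : S.trace ≤ (m : ℝ) * c := by
    rw [Matrix.trace]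
    calc ∑ i, S.diag i ≤ ∑ _i : Fin m, c := Finset.sum_le_sum fun i _ => hdiag i
    _ = (m : ℝ) * c := by simp [mul_comm]
  -- AM-GM
  have hamgm := Real.geom_mean_le_arith_mean_weighted Finset.univ
      (fun _ : Fin m => (m : ℝ)⁻¹) h.eigenvalues
      (fun i _ => by positivity)
      (by simp [Finset.sum_const, hm0])
      (fun i _ => hev i)
  have hsum : ∑ i, (m : ℝ)⁻¹ * h.eigenvalues i ≤ c := by
    rw [← Finset.mul_sum, htr]
    calc (m : ℝ)⁻¹ * S.trace ≤ (m : ℝ)⁻¹ * ((m : ℝ) * c) := by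
          apply mul_le_mul_of_nonneg_left htrace_le (by positivity)
    _ = c := by field_simp
  have hprod_le : ∏ i, h.eigenvalues i ^ ((m : ℝ)⁻¹) ≤ c := le_trans hamgm hsum
  have hdet : S.det = ∏ i, h.eigenvalues i := by
    rw [h.det_eq_prod_eigenvalues]; norm_num
  rw [hdet]
  have hkey : ∏ i, h.eigenvalues i = (∏ i, h.eigenvalues i ^ ((m : ℝ)⁻¹)) ^ m := by
    rw [← Finset.prod_pow]
    refine Finset.prod_congr rfl fun i _ => ?_
    rw [← Real.rpow_natCast (h.eigenvalues i ^ ((m : ℝ)⁻¹)) m,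
      ← Real.rpow_mul (hev i), inv_mul_cancel₀ hm0, Real.rpow_one]
  rw [hkey]
  exact pow_le_pow_left₀ (Finset.prod_nonneg fun i _ => Real.rpow_nonneg (hev i) _) hprod_le m

/-- Concavity-type bound: for `0 ≤ D ≤ B`, `0 < a`,
`D * log (1 + a*B) ≤ B * log (1 + a*D)`. -/
lemma mul_log_le_of_le {a B D : ℝ} (ha : 0 < a) (hB : 0 < B) (hD0 : 0 ≤ D) (hDB : D ≤ B) :
    D * Real.log (1 + a * B) ≤ B * Real.log (1 + a * D) := by
  set t : ℝ := D / B with ht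
  have ht0 : 0 ≤ t := by positivity
  have ht1 : t ≤ 1 := div_le_one_of_le₀ hDB hB.le
  have hs : (-1 : ℝ) ≤ a * B := by nlinarith
  have hbern := rpow_one_add_le_one_add_mul_self hs ht0 ht1
  have hpos : (0 : ℝ) < 1 + a * B := by nlinarith
  have h1 : 1 + t * (a * B) = 1 + a * D := by
    rw [ht]; field_simp
  have hlog : t * Real.log (1 + a * B) ≤ Real.log (1 + a * D) := by
    rw [← Real.log_rpow hpos, ← h1]
    exact Real.log_le_log (by positivity) hbern
  have hDt : D = t * B := by rw [ht]; field_simp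
  calc D * Real.log (1 + a * B) = B * (t * Real.log (1 + a * B)) := by rw [hDt]; ring
  _ ≤ B * Real.log (1 + a * D) := by
      exact mul_le_mul_of_nonneg_left hlog hB.le

/-- Lemma 3 of the paper: for a positive semidefinite `m × m`
covariance matrix `S` with diagonal entries at most `σf ^ 2`, we have
`det S ≤ C₁ * log (1 + σ^{-2m} * det S)` with
`C₁ = σf^{2m} / log (1 + σ^{-2m} σf^{2m})`. -/
theorem det_le_log_one_add_det
    (m : ℕ) (hm : 1 ≤ m) (σf σ : ℝ) (hσf : 0 < σf) (hσ : 0 < σ)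
    (S : Matrix (Fin m) (Fin m) ℝ)
    (hpsd : S.PosSemidef)
    (hdiag : ∀ j, S j j ≤ σf ^ 2) :
    S.det ≤ (σf ^ (2 * m) / Real.log (1 + (σ ^ (2 * m))⁻¹ * σf ^ (2 * m))) *
      Real.log (1 + (σ ^ (2 * m))⁻¹ * S.det) := by
  set a : ℝ := (σ ^ (2 * m))⁻¹ with ha
  set B : ℝ := σf ^ (2 * m) with hB
  have ha0 : 0 < a := by positivity
  have hB0 : 0 < B := by positivity
  have hD0 : 0 ≤ S.det := by
    rw [hpsd.1.det_eq_prod_eigenvalues]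
    push_cast
    exact Finset.prod_nonneg fun i _ => hpsd.eigenvalues_nonneg i
  have hDB : S.det ≤ B := by
    have := det_le_pow_of_diag_le hm hpsd (by positivity : (0:ℝ) ≤ σf ^ 2) hdiag
    calc S.det ≤ (σf ^ 2) ^ m := this
    _ = B := by rw [hB, ← pow_mul]
  have hL : 0 < Real.log (1 + a * B) := by
    apply Real.log_pos; nlinarith
  rw [div_mul_eq_mul_div, le_div_iff₀ hL]
  calc S.det * Real.log (1 + a * B) ≤ B * Real.log (1 + a * S.det) :=
        mul_log_le_of_le ha0 hB0 hD0 hDB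
  _ = B * Real.log (1 + a * S.det) := rfl
end

section
/- Let m ≥ 1 and n ≥ 1 be natural numbers, let σ_f > 0 and σ > 0 be reals, and let Σ₁, …, Σₙ be positive semidefinite real m×m matrices whose diagonal entries are all at most σ_f². Set C = 2·σ_f^{2m} / log(1 + σ^{−2m}·σ_f^{2m}). Then ∑_{i=1}^{n} det Σᵢ ≤ C · ( (1/2)·∑_{i=1}^{n} log det(I_m + σ^{−2}·Σᵢ) ). -/
open Matrix

lemma aux_one_add_prod_le {ι : Type*} (x : ι → ℝ) (hx : ∀ j, 0 ≤ x j) {s : Finset ι}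
    (hs : s.Nonempty) : 1 + ∏ j ∈ s, x j ≤ ∏ j ∈ s, (1 + x j) := by
  classical
  induction hs using Finset.Nonempty.cons_induction with
  | singleton a => simp
  | cons a s ha hs ih =>
    rw [Finset.prod_cons, Finset.prod_cons]
    have h0 := hx a
    have hp : (0:ℝ) ≤ ∏ j ∈ s, x j := Finset.prod_nonneg fun j _ => hx j
    have hq : (0:ℝ) ≤ ∏ j ∈ s, (1 + x j) :=
      Finset.prod_nonneg fun j _ => by linarith [hx j]
    nlinarith [ih]

lemma aux_key (m : ℕ) (hm : 1 ≤ m) (t c : ℝ) (ht : 0 < t) (hc : 0 < c)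
    (A : Matrix (Fin m) (Fin m) ℝ) (hA : A.PosSemidef) (hd : ∀ j, A j j ≤ t) :
    A.det * Real.log (1 + c ^ m * t ^ m) ≤ t ^ m * Real.log ((1 + c • A).det) := by
  have hH := hA.1
  set lam := hH.eigenvalues with hlam
  have hl : ∀ j, 0 ≤ lam j := hA.eigenvalues_nonneg
  have hdetA : A.det = ∏ j, lam j := by simpa using hH.det_eq_prod_eigenvalues
  -- trace = sum of eigenvalues
  have hm0 : (0:ℝ) < m := by exact_mod_cast hm
  set U : Matrix (Fin m) (Fin m) ℝ := (hH.eigenvectorUnitary : Matrix (Fin m) (Fin m) ℝ) with hU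
  have hUU : U * star U = 1 := mem_unitaryGroup_iff.mp hH.eigenvectorUnitary.2
  have hUU' : star U * U = 1 := mem_unitaryGroup_iff'.mp hH.eigenvectorUnitary.2
  have hspec : A = U * diagonal (RCLike.ofReal ∘ lam) * star U := hH.spectral_theorem
  have htr : ∑ j, lam j = ∑ j, A j j := by
    have h1 : A.trace = (U * diagonal (RCLike.ofReal ∘ lam) * star U).trace := by rw [← hspec]
    rw [Matrix.trace_mul_cycle, hUU', one_mul, Matrix.trace_diagonal] at h1
    simpa [Matrix.trace] using h1.symm
  have hsum : ∑ j, lam j ≤ m * t := by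
    calc ∑ j, lam j = ∑ j, A j j := htr
    _ ≤ ∑ _j : Fin m, t := Finset.sum_le_sum fun j _ => hd j
    _ = m * t := by simp [mul_comm]
  -- AM-GM : det A ≤ t^m
  have hAM : A.det ≤ t ^ m := by
    have hgm : ∏ j, (lam j) ^ ((m:ℝ)⁻¹) ≤ ∑ j, (m:ℝ)⁻¹ * lam j :=
      Real.geom_mean_le_arith_mean_weighted Finset.univ (fun _ => (m:ℝ)⁻¹) lam
        (fun _ _ => by positivity)
        (by simp [Finset.card_univ]; field_simp)
        (fun j _ => hl j)
    have h2 : ∑ j, (m:ℝ)⁻¹ * lam j ≤ t := by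
      rw [← Finset.mul_sum]
      rw [inv_mul_le_iff₀ hm0]
      linarith [hsum]
    have h3 : ∏ j, lam j = (∏ j, (lam j) ^ ((m:ℝ)⁻¹)) ^ m := by
      rw [← Finset.prod_pow]
      refine Finset.prod_congr rfl fun j _ => ?_
      rw [← Real.rpow_natCast ((lam j) ^ ((m:ℝ)⁻¹)) m, ← Real.rpow_mul (hl j),
        inv_mul_cancel₀ (ne_of_gt hm0), Real.rpow_one]
    have h4 : (0:ℝ) ≤ ∏ j, (lam j) ^ ((m:ℝ)⁻¹) :=
      Finset.prod_nonneg fun j _ => Real.rpow_nonneg (hl j) _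
    rw [hdetA, h3]
    exact pow_le_pow_left₀ h4 (hgm.trans h2) m
  have hdet0 : 0 ≤ A.det := hdetA ▸ Finset.prod_nonneg fun j _ => hl j
  haveI : Nonempty (Fin m) := ⟨⟨0, hm⟩⟩
  have hdiagsplit : diagonal (fun j => 1 + c * lam j) =
      (1 : Matrix (Fin m) (Fin m) ℝ) + c • diagonal (RCLike.ofReal ∘ lam) := by
    ext j k
    by_cases h : j = k <;> simp [h, Matrix.one_apply, Matrix.diagonal_apply]
  have hform : (1 : Matrix (Fin m) (Fin m) ℝ) + c • A
      = U * diagonal (fun j => 1 + c * lam j) * star U := by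
    rw [hdiagsplit, Matrix.mul_add, Matrix.add_mul, Matrix.mul_one, hUU,
      Matrix.mul_smul, Matrix.smul_mul, ← hspec]
  have hdetc : (1 + c • A).det = ∏ j, (1 + c * lam j) := by
    rw [hform, det_mul_right_comm, hUU, one_mul, det_diagonal]
  have hlower : 1 + c ^ m * A.det ≤ (1 + c • A).det := by
    rw [hdetc, hdetA]
    have h := aux_one_add_prod_le (fun j => c * lam j)
      (fun j => mul_nonneg hc.le (hl j)) (Finset.univ_nonempty)
    calc 1 + c ^ m * ∏ j, lam j = 1 + ∏ j, (c * lam j) := by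
          rw [Finset.prod_mul_distrib, Finset.prod_const, Finset.card_univ, Fintype.card_fin]
      _ ≤ ∏ j, (1 + c * lam j) := h
  set M := t ^ m with hMdef
  set a := c ^ m with hadef
  set d := A.det with hddef
  have hM : 0 < M := pow_pos ht m
  have ha : 0 < a := pow_pos hc m
  have hp1 : 0 ≤ d / M := div_nonneg hdet0 hM.le
  have hp2 : d / M ≤ 1 := (div_le_one hM).mpr hAM
  have hbern : (1 + a * M) ^ (d / M) ≤ 1 + (d / M) * (a * M) :=
    rpow_one_add_le_one_add_mul_self (by nlinarith) hp1 hp2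
  have heq : (d / M) * (a * M) = a * d := by field_simp
  have hlog1 : (d / M) * Real.log (1 + a * M) ≤ Real.log (1 + a * d) := by
    rw [← Real.log_rpow (by nlinarith) (d / M)]
    apply Real.log_le_log (Real.rpow_pos_of_pos (by nlinarith) _)
    rw [← heq]
    exact hbern
  have hlog2 : Real.log (1 + a * d) ≤ Real.log ((1 + c • A).det) :=
    Real.log_le_log (by nlinarith [mul_nonneg ha.le hdet0]) hlower
  calc d * Real.log (1 + a * M) = M * ((d / M) * Real.log (1 + a * M)) := by
        field_simp
    _ ≤ M * Real.log ((1 + c • A).det) :=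
        mul_le_mul_of_nonneg_left (hlog1.trans hlog2) hM.le


/-- Lemma 4 of the paper: the sum of the determinants of the positive
semidefinite covariance matrices `S 1, …, S n` (with diagonal entries at most `σf ^ 2`)
is bounded by `C` times the mutual information `(1/2) ∑ i, log det (I + σ⁻² • S i)`,
where `C = 2 σf^{2m} / log (1 + σ^{-2m} σf^{2m})`. -/
theorem sum_det_le_mutual_information
    (m n : ℕ) (hm : 1 ≤ m) (hn : 1 ≤ n) (σf σ : ℝ) (hσf : 0 < σf) (hσ : 0 < σ)
    (S : Fin n → Matrix (Fin m) (Fin m) ℝ)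
    (hpsd : ∀ i, (S i).PosSemidef)
    (hdiag : ∀ i j, S i j j ≤ σf ^ 2) :
    ∑ i, (S i).det ≤
      (2 * σf ^ (2 * m) / Real.log (1 + (σ ^ (2 * m))⁻¹ * σf ^ (2 * m))) *
        ((1 / 2 : ℝ) * ∑ i, Real.log ((1 + (σ ^ 2)⁻¹ • S i).det)) := by
  have hL : (0:ℝ) < Real.log (1 + ((σ ^ 2)⁻¹) ^ m * (σf ^ 2) ^ m) := by
    apply Real.log_pos
    have h : (0:ℝ) < ((σ ^ 2)⁻¹) ^ m * (σf ^ 2) ^ m := by positivity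
    linarith
  have hkey : ∀ i, (S i).det * Real.log (1 + ((σ ^ 2)⁻¹) ^ m * (σf ^ 2) ^ m)
      ≤ (σf ^ 2) ^ m * Real.log ((1 + (σ ^ 2)⁻¹ • S i).det) := fun i =>
    aux_key m hm (σf ^ 2) ((σ ^ 2)⁻¹) (by positivity) (by positivity) (S i) (hpsd i) (hdiag i)
  have hsum : (∑ i, (S i).det) * Real.log (1 + ((σ ^ 2)⁻¹) ^ m * (σf ^ 2) ^ m)
      ≤ (σf ^ 2) ^ m * ∑ i, Real.log ((1 + (σ ^ 2)⁻¹ • S i).det) := by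
    rw [Finset.sum_mul, Finset.mul_sum]
    exact Finset.sum_le_sum fun i _ => hkey i
  have hpm : σf ^ (2 * m) = (σf ^ 2) ^ m := by rw [pow_mul]
  have hpm2 : (σ ^ (2 * m))⁻¹ = ((σ ^ 2)⁻¹) ^ m := by rw [pow_mul, inv_pow]
  rw [hpm, hpm2, div_mul_eq_mul_div, le_div_iff₀ hL]
  have h2 : 2 * (σf ^ 2) ^ m * ((1 / 2 : ℝ) * ∑ i, Real.log ((1 + (σ ^ 2)⁻¹ • S i).det))
      = (σf ^ 2) ^ m * ∑ i, Real.log ((1 + (σ ^ 2)⁻¹ • S i).det) := by ring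
  rw [h2]
  exact hsum
end
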